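/- For any set A, the relations Δ_A = {(x1,x2,x3,x4) ∈ A^4 : x1 = x2 or x3 = x4} and δ_A = {(x1,x2,x3) ∈ A^3 : x1 = x2 or x2 = x3} are primitive positively definable from each other: (x1,x2,x3) ∈ δ_A iff (x1,x2,x2,x3) ∈ Δ_A, and (x1,x2,x3,x4) ∈ Δ_A iff there exist y1, y2 ∈ A with (x1,x2,y1), (y1,x3,x4), (x2,x1,y2), (y2,x3,x4) all in δ_A. -/
import Mathlib


/-- A clone on a set `A`: a family of finitary operations containing all
projections and closed under composition. -/
structure Clone (A : Type) where
  ops : ∀ n : ℕ, Set ((Fin n → A) → A)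
  proj_mem : ∀ (n : ℕ) (i : Fin n), (fun x => x i) ∈ ops n
  comp_mem : ∀ (m n : ℕ) (f : (Fin n → A) → A) (g : Fin n → (Fin m → A) → A),
      f ∈ ops n → (∀ i, g i ∈ ops m) → (fun x => f (fun i => g i x)) ∈ ops m

/-- `X ⊆ A^n` is algebraic w.r.t. a family of operations `F`: it is the solution
set of some system of equations between `n`-ary members of `F`. -/
def IsAlgSet {A : Type} (F : ∀ n : ℕ, Set ((Fin n → A) → A)) (n : ℕ)
    (X : Set (Fin n → A)) : Prop :=
  ∃ (I : Type) (p q : I → (Fin n → A) → A),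
    (∀ i, p i ∈ F n) ∧ (∀ i, q i ∈ F n) ∧ X = {x | ∀ i, p i x = q i x}

/-- Equational additivity: unions of algebraic sets of the same arity are algebraic. -/
def EqAdditive {A : Type} (F : ∀ n : ℕ, Set ((Fin n → A) → A)) : Prop :=
  ∀ (n : ℕ) (X Y : Set (Fin n → A)),
    IsAlgSet F n X → IsAlgSet F n Y → IsAlgSet F n (X ∪ Y)

/-- The quaternary relation `Δ_A`. -/
def Delta (A : Type) : Set (Fin 4 → A) := {x | x 0 = x 1 ∨ x 2 = x 3}
/-- The ternary relation `δ_A`. -/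
def Delta3 (A : Type) : Set (Fin 3 → A) := {x | x 0 = x 1 ∨ x 1 = x 2}

/-- `Δ_A` and `δ_A` are primitive positively definable from each other. -/
theorem stmt5 {A : Type} :
    (∀ x : Fin 3 → A, x ∈ Delta3 A ↔ ![x 0, x 1, x 1, x 2] ∈ Delta A) ∧
    (∀ x : Fin 4 → A, x ∈ Delta A ↔
      ∃ y1 y2 : A,
        ![x 0, x 1, y1] ∈ Delta3 A ∧ ![y1, x 2, x 3] ∈ Delta3 A ∧
        ![x 1, x 0, y2] ∈ Delta3 A ∧ ![y2, x 2, x 3] ∈ Delta3 A) := by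
  constructor
  · intro x
    simp [Delta3, Delta]
  · intro x
    simp only [Delta, Delta3, Set.mem_setOf_eq, Matrix.cons_val_zero,
      Matrix.cons_val_one, Matrix.head_cons, Matrix.cons_val_two, Matrix.tail_cons,
      Matrix.cons_val_three]
    constructor
    · rintro (h | h)
      · exact ⟨x 2, x 2, Or.inl h, Or.inl rfl, Or.inl h.symm, Or.inl rfl⟩
      · exact ⟨x 1, x 0, Or.inr rfl, Or.inr h, Or.inr rfl, Or.inr h⟩
    · rintro ⟨y1, y2, h1 | h1, h2 | h2, h3 | h3, h4 | h4⟩ <;>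
        first
          | exact Or.inl h1 | exact Or.inr h2 | exact Or.inr h4
          | exact Or.inl h3.symm
          | exact Or.inl ((h3.trans h4).trans (h2.symm.trans h1.symm))
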